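/- For every real number a with a ≤ −2 and every natural number n, the expression f(2n+6)·(174a³+395a²+226a)/5 + f(2n+7)·(282a³+650a²+428a+105)/5 + (−1)ⁿ·(12a³+20a²+8a)/5 is strictly negative; in particular, the norm of every Fibonacci octonion in the generalized octonion algebra O_ℝ(a+1, 2a+1, 3a+1) is nonzero, so all Fibonacci octonions are invertible in this algebra. -/

import Mathlib

theorem norm_fibonacci_octonion_neg (a : ℝ) (ha : a ≤ -2) (n : ℕ) :
    (Nat.fib (2 * n + 6) : ℝ) * (174 * a ^ 3 + 395 * a ^ 2 + 226 * a) / 5 +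
      (Nat.fib (2 * n + 7) : ℝ) * (282 * a ^ 3 + 650 * a ^ 2 + 428 * a + 105) / 5 +
      (-1 : ℝ) ^ n * (12 * a ^ 3 + 20 * a ^ 2 + 8 * a) / 5 < 0 := by
  have ht : a + 2 ≤ 0 := by linarith
  have hP : 174 * a ^ 3 + 395 * a ^ 2 + 226 * a < 0 := by
    nlinarith [sq_nonneg (a + 2), sq_nonneg a, mul_nonpos_of_nonneg_of_nonpos (sq_nonneg (a+2)) ht]
  have hQ : 282 * a ^ 3 + 650 * a ^ 2 + 428 * a + 105 < 0 := by
    nlinarith [sq_nonneg (a + 2), sq_nonneg a, mul_nonpos_of_nonneg_of_nonpos (sq_nonneg (a+2)) ht]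
  have hR : 12 * a ^ 3 + 20 * a ^ 2 + 8 * a ≤ 0 := by
    nlinarith [sq_nonneg (a + 2), sq_nonneg a, mul_nonpos_of_nonneg_of_nonpos (sq_nonneg (a+2)) ht]
  have hS : 5046 * a ^ 3 + 11590 * a ^ 2 + 7364 * a + 1365 < 0 := by
    nlinarith [sq_nonneg (a + 2), sq_nonneg a, mul_nonpos_of_nonneg_of_nonpos (sq_nonneg (a+2)) ht]
  have hf6 : (8 : ℝ) ≤ (Nat.fib (2 * n + 6) : ℝ) := by
    have : Nat.fib 6 ≤ Nat.fib (2 * n + 6) := Nat.fib_mono (by omega)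
    simpa [show Nat.fib 6 = 8 from rfl] using (Nat.cast_le.mpr this : ((Nat.fib 6 : ℕ) : ℝ) ≤ _)
  have hf7 : (13 : ℝ) ≤ (Nat.fib (2 * n + 7) : ℝ) := by
    have : Nat.fib 7 ≤ Nat.fib (2 * n + 7) := Nat.fib_mono (by omega)
    simpa [show Nat.fib 7 = 13 from rfl] using (Nat.cast_le.mpr this : ((Nat.fib 7 : ℕ) : ℝ) ≤ _)
  have h6 : ((Nat.fib (2 * n + 6) : ℝ) - 8) * (174 * a ^ 3 + 395 * a ^ 2 + 226 * a) ≤ 0 :=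
    mul_nonpos_of_nonneg_of_nonpos (by linarith) (le_of_lt hP)
  have h7 : ((Nat.fib (2 * n + 7) : ℝ) - 13) * (282 * a ^ 3 + 650 * a ^ 2 + 428 * a + 105) ≤ 0 :=
    mul_nonpos_of_nonneg_of_nonpos (by linarith) (le_of_lt hQ)
  rcases Nat.even_or_odd n with h | h
  · rw [h.neg_one_pow]
    nlinarith [h6, h7]
  · rw [h.neg_one_pow]
    nlinarith [h6, h7]
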